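/- arXiv:2209.03054 — 2 statements merged into one kernel-verified Lean document; each statement's English description precedes it below -/
import Mathlib

section
/- Let u : 2^[n] → ℝ≥0 be any set function with u(∅) = 0 and let L, O be permutations of [n]. Then for all i, j ∈ [n]: u(o_i | L_{j−1}) + Σ_{r=j}^n u(l_r | L_{r−1} ∪ {o_i}) = u([n]) − u(L_{j−1}), and likewise u(o_i | O_{i−1} ∪ L_{j−1}) + Σ_{r=j}^n [u(l_r | L_{r−1}) − b_{ir}] = u([n]) − u(L_{j−1}); consequently the two left-hand sides are equal. -/
open Finset

/-- The set of the first `k` elements of the list `L`. -/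
def prefSet {n : ℕ} (L : List (Fin n)) (k : ℕ) : Finset (Fin n) := (L.take k).toFinset

/-- Marginal value `f(e|S) = f(S ∪ {e}) - f S`. -/
noncomputable def marg {n : ℕ} (f : Finset (Fin n) → ℝ) (e : Fin n) (S : Finset (Fin n)) : ℝ :=
  f (insert e S) - f S

/-- `L` is a listing of all elements of `[n]` (a permutation of `[n]`). -/
def IsPermList {n : ℕ} (L : List (Fin n)) : Prop := L.Nodup ∧ ∀ x : Fin n, x ∈ L

/-- The objective value `∑_{i=1}^n c(S_i)(u(S_i) - u(S_{i-1}))`. -/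
noncomputable def objective {n : ℕ} (u c : Finset (Fin n) → ℝ) (L : List (Fin n)) : ℝ :=
  ∑ i ∈ Finset.range L.length,
    c (prefSet L (i + 1)) * (u (prefSet L (i + 1)) - u (prefSet L i))

/-- The element in (1-indexed) position `k` of the list `L`. -/
def elemAt {n : ℕ} [NeZero n] (L : List (Fin n)) (k : ℕ) : Fin n := L.getD (k - 1) default

/-- The quantity `b_{ij} = u(o_i | O_{i-1} ∪ L_{j-1}) - u(o_i | O_{i-1} ∪ L_{j-1} ∪ {l_j})`. -/
noncomputable def bmat {n : ℕ} [NeZero n] (u : Finset (Fin n) → ℝ) (L O : List (Fin n))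
    (i j : ℕ) : ℝ :=
  marg u (elemAt O i) (prefSet O (i - 1) ∪ prefSet L (j - 1)) -
    marg u (elemAt O i) (insert (elemAt L j) (prefSet O (i - 1) ∪ prefSet L (j - 1)))

/-- Monotone set function. -/
def Mono {n : ℕ} (f : Finset (Fin n) → ℝ) : Prop :=
  ∀ S : Finset (Fin n), ∀ i : Fin n, f S ≤ f (insert i S)

/-- Submodular set function. -/
def Submod {n : ℕ} (f : Finset (Fin n) → ℝ) : Prop :=
  ∀ S : Finset (Fin n), ∀ i j : Fin n, i ∉ S → j ∉ S →
    marg f i (insert j S) ≤ marg f i S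

/-- Second-order supermodular set function. -/
def SOSupermod {n : ℕ} (f : Finset (Fin n) → ℝ) : Prop :=
  ∀ S : Finset (Fin n), ∀ i j k : Fin n, i ∉ S → j ∉ S → k ∉ S →
    marg f i (insert k S) - marg f i (insert j (insert k S)) ≤
      marg f i S - marg f i (insert j S)

/-- Objective value of a length-(n+1) pseudo-neighbor sequence, where costs are
counted with multiplicity via the singleton costs `cs`. -/
noncomputable def pseudoObj {n : ℕ} (u : Finset (Fin n) → ℝ) (cs : Fin n → ℝ)
    (P : List (Fin n)) : ℝ :=
  ∑ k ∈ Finset.range P.length,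
    (((P.take (k + 1)).map cs).sum) * (u (prefSet P (k + 1)) - u (prefSet P k))

/-- The pseudo-neighbor of `L` obtained by inserting a second copy of the element in
(1-indexed) position `i` at (1-indexed) position `j`. -/
def pseudoNeighbor {n : ℕ} [NeZero n] (L : List (Fin n)) (i j : ℕ) : List (Fin n) :=
  L.insertIdx (j - 1) (elemAt L i)

/-- `L` is locally optimal with respect to insertions: no pseudo-neighbor has strictly
smaller objective value. -/
def LocallyOptimalInsertions {n : ℕ} [NeZero n] (u c : Finset (Fin n) → ℝ) (cs : Fin n → ℝ)
    (L : List (Fin n)) : Prop :=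
  ∀ i j : ℕ, 1 ≤ j → j < i → i ≤ n →
    objective u c L ≤ pseudoObj u cs (pseudoNeighbor L i j)

/-- The list obtained from `L` by removing the element in (1-indexed) position `i` and
reinserting it at (1-indexed) position `j`. -/
def moveList {n : ℕ} [NeZero n] (L : List (Fin n)) (i j : ℕ) : List (Fin n) :=
  (L.eraseIdx (i - 1)).insertIdx (j - 1) (elemAt L i)

/-- `L'` is a move-neighbor of `L`. -/
def IsMoveNeighbor {n : ℕ} [NeZero n] (L L' : List (Fin n)) : Prop :=
  ∃ i j : ℕ, 1 ≤ i ∧ i ≤ n ∧ 1 ≤ j ∧ j ≤ n ∧ i ≠ j ∧ L' = moveList L i j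

lemma permLen {n : ℕ} {L : List (Fin n)} (hL : IsPermList L) : L.length = n := by
  have h1 : L.toFinset = Finset.univ := by ext x; simp [hL.2 x]
  have h2 := List.toFinset_card_of_nodup hL.1
  rw [h1] at h2
  simpa using h2.symm

lemma prefSet_full {n : ℕ} {L : List (Fin n)} (hL : IsPermList L) :
    prefSet L n = Finset.univ := by
  unfold prefSet
  rw [List.take_of_length_le (le_of_eq (permLen hL))]
  ext x; simp [hL.2 x]

lemma prefSet_succ {n : ℕ} [NeZero n] (L : List (Fin n)) (r : ℕ) (hr : r < L.length) :
    prefSet L (r + 1) = insert (L.getD r default) (prefSet L r) := by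
  rw [List.getD_eq_getElem L default hr]
  ext x
  unfold prefSet
  rw [List.take_succ, List.getElem?_eq_getElem hr]
  simp only [Option.toList_some, List.mem_toFinset, List.mem_append, List.mem_singleton,
    Finset.mem_insert]
  tauto

lemma prefSet_eq_insert {n : ℕ} [NeZero n] {L : List (Fin n)} (hL : IsPermList L)
    {r : ℕ} (h1 : 1 ≤ r) (h2 : r ≤ n) :
    prefSet L r = insert (elemAt L r) (prefSet L (r - 1)) := by
  have hr' : r - 1 < L.length := by rw [permLen hL]; omega
  have := prefSet_succ L (r - 1) hr'
  rw [Nat.sub_add_cancel h1] at this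
  exact this

lemma telescope_Icc {j n : ℕ} (hj1 : 1 ≤ j) (hjn : j ≤ n) (F G : ℕ → ℝ)
    (hFG : ∀ r, j ≤ r → r ≤ n → F r = G r - G (r - 1)) :
    ∑ r ∈ Finset.Icc j n, F r = G n - G (j - 1) := by
  rw [show Finset.Icc j n = Finset.Ico j (n + 1) by rw [Finset.Ico_add_one_right_eq_Icc],
    Finset.sum_Ico_eq_sum_range]
  have key : ∀ i ∈ Finset.range (n + 1 - j), F (j + i)
      = (fun k => G (j - 1 + k)) (i + 1) - (fun k => G (j - 1 + k)) i := by
    intro i hi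
    simp only [Finset.mem_range] at hi
    have h1 : j - 1 + (i + 1) = j + i := by omega
    have h2 : j - 1 + i = j + i - 1 := by omega
    rw [hFG (j + i) (by omega) (by omega)]
    simp only [h1, h2]
  rw [Finset.sum_congr rfl key, Finset.sum_range_sub (fun k => G (j - 1 + k))]
  congr 2 <;> omega

theorem telescoping_identities (n : ℕ) [NeZero n] (u : Finset (Fin n) → ℝ) (hu0 : u ∅ = 0)
    (hu_nonneg : ∀ S, 0 ≤ u S)
    (L O : List (Fin n)) (hL : IsPermList L) (hO : IsPermList O)
    (i j : ℕ) (hi1 : 1 ≤ i) (hin : i ≤ n) (hj1 : 1 ≤ j) (hjn : j ≤ n) :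
    (marg u (elemAt O i) (prefSet L (j - 1)) +
        ∑ r ∈ Finset.Icc j n, marg u (elemAt L r) (insert (elemAt O i) (prefSet L (r - 1))) =
      u Finset.univ - u (prefSet L (j - 1))) ∧
    (marg u (elemAt O i) (prefSet O (i - 1) ∪ prefSet L (j - 1)) +
        ∑ r ∈ Finset.Icc j n, (marg u (elemAt L r) (prefSet L (r - 1)) - bmat u L O i r) =
      u Finset.univ - u (prefSet L (j - 1))) ∧
    (marg u (elemAt O i) (prefSet L (j - 1)) +
        ∑ r ∈ Finset.Icc j n, marg u (elemAt L r) (insert (elemAt O i) (prefSet L (r - 1))) =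
      marg u (elemAt O i) (prefSet O (i - 1) ∪ prefSet L (j - 1)) +
        ∑ r ∈ Finset.Icc j n, (marg u (elemAt L r) (prefSet L (r - 1)) - bmat u L O i r)) := by
  set o := elemAt O i with ho
  set Oi := prefSet O (i - 1) with hOi
  have huniv : insert o Finset.univ = (Finset.univ : Finset (Fin n)) :=
    Finset.insert_eq_self.2 (Finset.mem_univ _)
  have hOuniv : Oi ∪ Finset.univ = (Finset.univ : Finset (Fin n)) := by simp
  -- first sum
  have hsum1 : ∑ r ∈ Finset.Icc j n, marg u (elemAt L r) (insert o (prefSet L (r - 1)))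
      = u Finset.univ - u (insert o (prefSet L (j - 1))) := by
    have := telescope_Icc hj1 hjn
      (fun r => marg u (elemAt L r) (insert o (prefSet L (r - 1))))
      (fun k => u (insert o (prefSet L k)))
      (by
        intro r hr1 hr2
        simp only [marg]
        rw [prefSet_eq_insert hL (by omega : 1 ≤ r) hr2, Finset.insert_comm])
    rw [this]
    simp only [prefSet_full hL, huniv]
  -- second sum
  have hsum2 : ∑ r ∈ Finset.Icc j n, (marg u (elemAt L r) (prefSet L (r - 1)) - bmat u L O i r)
      = (u Finset.univ - u (prefSet L (j - 1)))
        - (u (insert o (Oi ∪ prefSet L (j - 1))) - u (Oi ∪ prefSet L (j - 1))) := by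
    have := telescope_Icc hj1 hjn
      (fun r => marg u (elemAt L r) (prefSet L (r - 1)) - bmat u L O i r)
      (fun k => u (prefSet L k) + (u (insert o (Oi ∪ prefSet L k)) - u (Oi ∪ prefSet L k)))
      (by
        intro r hr1 hr2
        simp only [marg, bmat, ← ho, ← hOi]
        rw [prefSet_eq_insert hL (by omega : 1 ≤ r) hr2, Finset.union_insert, Finset.insert_comm]
        ring)
    rw [this]
    simp only [prefSet_full hL, hOuniv, huniv]
    ring
  refine ⟨?_, ?_, ?_⟩
  · rw [hsum1]; simp only [marg]; ring
  · rw [hsum2]; simp only [marg]; ring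
  · rw [hsum1, hsum2]; simp only [marg]; ring
end

section
/- Suppose u : 2^[n] → ℝ≥0 is a normalized, monotone set function and c : 2^[n] → ℝ≥0 is modular with positive singleton costs c_1,…,c_n. Then any permutation of [n] that lists the elements i ∈ [n] in non-decreasing order of c_i has objective value at most n times the minimum objective value over all permutations of [n]. -/
open Finset

lemma mono_subset' {n : ℕ} {f : Finset (Fin n) → ℝ} (hf : Mono f) :
    ∀ {S T : Finset (Fin n)}, S ⊆ T → f S ≤ f T := by
  have key : ∀ (A S : Finset (Fin n)), f S ≤ f (S ∪ A) := by
    intro A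
    induction A using Finset.induction with
    | empty => simp [le_refl]
    | insert a A' h ih =>
      intro S
      calc f S ≤ f (S ∪ A') := ih S
        _ ≤ f (insert a (S ∪ A')) := hf _ _
        _ = f (S ∪ insert a A') := by rw [Finset.union_insert]
  intro S T h
  have hT : T = S ∪ (T \ S) := by rw [Finset.union_sdiff_of_subset h]
  rw [hT]; exact key _ _

lemma overlap_eq' (a a' x y : ℝ) (haa : a' ≤ a) (hxy : x ≤ y) :
    max 0 (min a y - max a' x) = max a' (min a y) - max a' (min a x) := by
  simp only [max_def, min_def]
  split_ifs <;> linarith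

lemma tele_sum' (m : ℕ) (a a' : ℝ) (b : ℕ → ℝ) (hb : ∀ k, k < m → b k ≤ b (k+1))
    (h0 : b 0 ≤ a') (hm : a ≤ b m) (haa : a' ≤ a) :
    ∑ k ∈ Finset.range m, max 0 (min a (b (k+1)) - max a' (b k)) = a - a' := by
  have h1 : ∀ k ∈ Finset.range m, max 0 (min a (b (k+1)) - max a' (b k))
      = max a' (min a (b (k+1))) - max a' (min a (b k)) := fun k hk =>
    overlap_eq' a a' (b k) (b (k+1)) haa (hb k (Finset.mem_range.mp hk))
  rw [Finset.sum_congr rfl h1, Finset.sum_range_sub (fun k => max a' (min a (b k))),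
    min_eq_left hm, min_eq_right (h0.trans haa), max_eq_right haa, max_eq_left h0]

theorem nondecreasing_cost_n_approx (n : ℕ) [NeZero n]
    (u c : Finset (Fin n) → ℝ) (cs : Fin n → ℝ)
    (hu0 : u ∅ = 0) (hu_nonneg : ∀ S, 0 ≤ u S) (hu_mono : Mono u)
    (hcs_pos : ∀ i, 0 < cs i) (hc : ∀ S, c S = ∑ i ∈ S, cs i)
    (L : List (Fin n)) (hL : IsPermList L)
    (hsorted : L.Pairwise (fun a b => cs a ≤ cs b)) :
    ∀ O, IsPermList O → objective u c L ≤ n * objective u c O := by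
  obtain ⟨hLnd, hLmem⟩ := hL
  intro O hO
  obtain ⟨hOnd, hOmem⟩ := hO
  have perm_len : ∀ (M : List (Fin n)), M.Nodup → (∀ x, x ∈ M) → M.length = n := by
    intro M hnd hmem
    have h1 : M.toFinset = Finset.univ :=
      Finset.eq_univ_iff_forall.mpr (fun x => List.mem_toFinset.mpr (hmem x))
    have h2 := List.toFinset_card_of_nodup hnd
    rw [h1, Finset.card_univ, Fintype.card_fin] at h2
    omega
  have hLlen : L.length = n := perm_len L hLnd hLmem
  have hOlen : O.length = n := perm_len O hOnd hOmem
  have prefL_zero : prefSet L 0 = ∅ := by simp [prefSet]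
  have prefO_zero : prefSet O 0 = ∅ := by simp [prefSet]
  have mem_pref : ∀ (M : List (Fin n)) (k : ℕ) (x : Fin n),
      x ∈ prefSet M k ↔ ∃ p, ∃ _ : p < k ⊓ M.length, M[p] = x := by
    intro M k x
    rw [prefSet, List.mem_toFinset, List.mem_take_iff_getElem]
  have pref_mono : ∀ (M : List (Fin n)) (i j : ℕ), i ≤ j → prefSet M i ⊆ prefSet M j := by
    intro M i j hij x hx
    rw [mem_pref] at hx ⊢
    obtain ⟨p, hp, hxp⟩ := hx
    rw [Nat.lt_min] at hp
    exact ⟨p, Nat.lt_min.mpr ⟨lt_of_lt_of_le hp.1 hij, hp.2⟩, hxp⟩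
  have ha_mono : ∀ i j, i ≤ j → u (prefSet L i) ≤ u (prefSet L j) :=
    fun i j hij => mono_subset' hu_mono (pref_mono L i j hij)
  have hb_mono : ∀ i j, i ≤ j → u (prefSet O i) ≤ u (prefSet O j) :=
    fun i j hij => mono_subset' hu_mono (pref_mono O i j hij)
  have hbn_top : ∀ (S : Finset (Fin n)), u S ≤ u (prefSet O n) := by
    intro S
    apply mono_subset' hu_mono
    intro x _
    rw [mem_pref]
    obtain ⟨q, hq, hxq⟩ := List.mem_iff_getElem.mp (hOmem x)
    exact ⟨q, Nat.lt_min.mpr ⟨by omega, hq⟩, hxq⟩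
  -- the overlap weights
  set w : ℕ → ℕ → ℝ := fun i k =>
    max 0 (min (u (prefSet L (i+1))) (u (prefSet O (k+1))) -
      max (u (prefSet L i)) (u (prefSet O k))) with hw
  have hw_nonneg : ∀ i k, 0 ≤ w i k := fun i k => le_max_left _ _
  have rowsum : ∀ i, ∑ k ∈ Finset.range n, w i k
      = u (prefSet L (i+1)) - u (prefSet L i) := by
    intro i
    apply tele_sum' n (u (prefSet L (i+1))) (u (prefSet L i)) (fun k => u (prefSet O k))
    · exact fun k _ => hb_mono k (k+1) (by omega)
    · rw [prefO_zero, hu0]; exact hu_nonneg _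
    · exact hbn_top _
    · exact ha_mono i (i+1) (by omega)
  have colsum : ∀ k, ∑ i ∈ Finset.range n, w i k
      = u (prefSet O (k+1)) - u (prefSet O k) := by
    intro k
    have hcomm : ∀ i ∈ Finset.range n, w i k
        = max 0 (min (u (prefSet O (k+1))) (u (prefSet L (i+1))) -
            max (u (prefSet O k)) (u (prefSet L i))) := by
      intro i _
      rw [hw]
      simp only [min_comm (u (prefSet L (i+1))), max_comm (u (prefSet L i))]
    rw [Finset.sum_congr rfl hcomm]
    apply tele_sum' n (u (prefSet O (k+1))) (u (prefSet O k)) (fun i => u (prefSet L i))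
    · exact fun i _ => ha_mono i (i+1) (by omega)
    · rw [prefL_zero, hu0]; exact hu_nonneg _
    · -- u (prefSet O (k+1)) ≤ u (prefSet L n)
      apply mono_subset' hu_mono
      intro x _
      rw [mem_pref]
      obtain ⟨q, hq, hxq⟩ := List.mem_iff_getElem.mp (hLmem x)
      exact ⟨q, Nat.lt_min.mpr ⟨by omega, hq⟩, hxq⟩
    · exact hb_mono k (k+1) (by omega)
  -- sortedness of L, index version
  have hsort : ∀ p q (hp : p < L.length) (hq : q < L.length), p ≤ q → cs L[p] ≤ cs L[q] := by
    intro p q hp hq hpq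
    rcases Nat.lt_or_ge p q with h | h
    · exact List.pairwise_iff_getElem.mp hsorted p q hp hq h
    · have : p = q := by omega
      subst this
      exact le_rfl
  -- key comparison for positive overlap
  have key : ∀ i k, i < n → 0 < w i k →
      cs (L.getD i default) ≤ c (prefSet O (k+1)) := by
    intro i k hi hpos
    have hiL : i < L.length := by omega
    rw [List.getD_eq_getElem L default hiL]
    have ht : 0 < min (u (prefSet L (i+1))) (u (prefSet O (k+1))) -
        max (u (prefSet L i)) (u (prefSet O k)) := by
      rcases lt_max_iff.mp hpos with h | h
      · exact absurd h (lt_irrefl 0)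
      · exact h
    have h1 : u (prefSet L i) < u (prefSet O (k+1)) := by
      have h2 := min_le_right (u (prefSet L (i+1))) (u (prefSet O (k+1)))
      have h3 := le_max_left (u (prefSet L i)) (u (prefSet O k))
      linarith
    have hns : ¬ prefSet O (k+1) ⊆ prefSet L i :=
      fun hsub => absurd (mono_subset' hu_mono hsub) (not_le.mpr h1)
    obtain ⟨x, hxO, hxL⟩ := Finset.not_subset.mp hns
    obtain ⟨q, hq, hxq⟩ := List.mem_iff_getElem.mp (hLmem x)
    have hiq : i ≤ q := by
      by_contra hcon
      push_neg at hcon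
      exact hxL ((mem_pref L i x).mpr ⟨q, Nat.lt_min.mpr ⟨hcon, hq⟩, hxq⟩)
    calc cs L[i] ≤ cs L[q] := hsort i q hiL hq hiq
      _ = cs x := by rw [hxq]
      _ ≤ ∑ y ∈ prefSet O (k+1), cs y :=
          Finset.single_le_sum (fun y _ => (hcs_pos y).le) hxO
      _ = c (prefSet O (k+1)) := (hc _).symm
  -- cost of L-prefix bounded by n times the singleton cost
  have costL : ∀ i, i < n → c (prefSet L (i+1)) ≤ (n : ℝ) * cs (L.getD i default) := by
    intro i hi
    have hiL : i < L.length := by omega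
    rw [hc, List.getD_eq_getElem L default hiL]
    have hcard : (prefSet L (i+1)).card ≤ n := by
      calc (prefSet L (i+1)).card ≤ (L.take (i+1)).length := List.toFinset_card_le _
        _ ≤ L.length := by rw [List.length_take]; omega
        _ = n := hLlen
    have hbd : ∀ y ∈ prefSet L (i+1), cs y ≤ cs L[i] := by
      intro y hy
      obtain ⟨p, hp, hyp⟩ := (mem_pref L (i+1) y).mp hy
      rw [Nat.lt_min] at hp
      rw [← hyp]
      exact hsort p i hp.2 hiL (by omega)
    calc ∑ y ∈ prefSet L (i+1), cs y
        ≤ (prefSet L (i+1)).card • cs L[i] := Finset.sum_le_card_nsmul _ _ _ hbd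
      _ = ((prefSet L (i+1)).card : ℝ) * cs L[i] := nsmul_eq_mul _ _
      _ ≤ (n : ℝ) * cs L[i] := by
          apply mul_le_mul_of_nonneg_right _ (hcs_pos _).le
          exact_mod_cast hcard
  -- core inequality
  have core : ∑ i ∈ Finset.range n,
      cs (L.getD i default) * (u (prefSet L (i+1)) - u (prefSet L i))
      ≤ objective u c O := by
    calc ∑ i ∈ Finset.range n,
        cs (L.getD i default) * (u (prefSet L (i+1)) - u (prefSet L i))
        = ∑ i ∈ Finset.range n, ∑ k ∈ Finset.range n, cs (L.getD i default) * w i k := by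
          apply Finset.sum_congr rfl
          intro i _
          rw [← rowsum i, Finset.mul_sum]
      _ ≤ ∑ i ∈ Finset.range n, ∑ k ∈ Finset.range n, c (prefSet O (k+1)) * w i k := by
          apply Finset.sum_le_sum
          intro i hi
          apply Finset.sum_le_sum
          intro k _
          rcases eq_or_lt_of_le (hw_nonneg i k) with h | h
          · rw [← h, mul_zero, mul_zero]
          · exact mul_le_mul_of_nonneg_right (key i k (Finset.mem_range.mp hi) h) (hw_nonneg i k)
      _ = ∑ k ∈ Finset.range n, c (prefSet O (k+1)) * ∑ i ∈ Finset.range n, w i k := by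
          rw [Finset.sum_comm]
          exact Finset.sum_congr rfl (fun k _ => (Finset.mul_sum _ _ _).symm)
      _ = objective u c O := by
          rw [objective, hOlen]
          exact Finset.sum_congr rfl (fun k _ => by rw [colsum k])
  -- assemble
  rw [objective, hLlen]
  calc ∑ i ∈ Finset.range n, c (prefSet L (i+1)) * (u (prefSet L (i+1)) - u (prefSet L i))
      ≤ ∑ i ∈ Finset.range n,
          (n : ℝ) * (cs (L.getD i default) * (u (prefSet L (i+1)) - u (prefSet L i))) := by
        apply Finset.sum_le_sum
        intro i hi
        rw [← mul_assoc]
        apply mul_le_mul_of_nonneg_right (costL i (Finset.mem_range.mp hi))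
        exact sub_nonneg.mpr (ha_mono i (i+1) (by omega))
    _ = (n : ℝ) * ∑ i ∈ Finset.range n,
          cs (L.getD i default) * (u (prefSet L (i+1)) - u (prefSet L i)) :=
        (Finset.mul_sum _ _ _).symm
    _ ≤ (n : ℝ) * objective u c O :=
        mul_le_mul_of_nonneg_left core (Nat.cast_nonneg n)
end
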